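/- Let T be a triangulated category with a bounded t-structure and let G be an object of T with amplitude w (i.e., H^n(G) = 0 outside an interval of length w). Then any object F of coprod_1(G(-∞,∞)) (a finite coproduct of shifts of G) decomposes for each integer a as F ≅ F' ⊕ F'' with F'' ∈ T^{< a}, F' ∈ T^{≥ a - w}, and both F', F'' again finite coproducts of shifts of G; in particular the projection F → F' is an isomorphism on H^n for all n ≥ a. -/

import Mathlib

/-!
Common preamble: generation in triangulated categories, truncation triangles for
t-structures, "isomorphism in degrees ≥ a", levels `⟨G⟩_n`, `coprod_n`,
and Rouquier dimension.
-/

open CategoryTheory Limits Pretriangulated Triangulated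

namespace RouquierApprox

variable {C : Type*} [Category C] [Preadditive C] [HasZeroObject C] [HasShift C ℤ]
  [∀ (n : ℤ), (shiftFunctor C n).Additive] [Pretriangulated C]

/-- A t-structure is non-degenerate if `⋂ₙ T^{≥n} = 0 = ⋂ₙ T^{≤-n}`. -/
def IsNonDegenerate (t : TStructure C) : Prop :=
  (∀ X : C, (∀ n : ℤ, t.ge n X) → IsZero X) ∧ (∀ X : C, (∀ n : ℤ, t.le n X) → IsZero X)

/-- A t-structure is bounded if every object is bounded. -/
def IsBoundedTStructure (t : TStructure C) : Prop :=
  ∀ X : C, ∃ n : ℤ, 0 < n ∧ t.le n X ∧ t.ge (-n) X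

/-- A choice of truncation triangle `τ_{≤ a-1} A ⟶ A ⟶ τ_{≥ a} A ⟶ (τ_{≤ a-1} A)[1]`. -/
structure TruncGETriangle (t : TStructure C) (a : ℤ) (A : C) where
  left : C
  right : C
  left_le : t.le (a - 1) left
  right_ge : t.ge a right
  ι : left ⟶ A
  π : A ⟶ right
  δ : right ⟶ left⟦(1 : ℤ)⟧
  dist : Triangle.mk ι π δ ∈ distTriang C

/-- `f : A ⟶ B` induces isomorphisms on the cohomology objects `H^n` (with respect to
the t-structure `t`) for all `n ≥ a`; for a non-degenerate t-structure this is
equivalently expressed by saying that any morphism induced by `f` between the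
truncations `τ_{≥ a} A ⟶ τ_{≥ a} B` is an isomorphism. -/
def IsIsoInDegreesGE (t : TStructure C) (a : ℤ) {A B : C} (f : A ⟶ B) : Prop :=
  ∀ (TA : TruncGETriangle t a A) (TB : TruncGETriangle t a B) (g : TA.right ⟶ TB.right),
    TA.π ≫ g = f ≫ TB.π → IsIso g

/-- `P` is a retract (direct summand) of `F`. -/
def IsRetract (P F : C) : Prop := ∃ (i : P ⟶ F) (r : F ⟶ P), i ≫ r = 𝟙 P

/-- Finite coproducts of shifts of objects of `S`. -/
def finCoprodShifts (S : Set C) : Set C :=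
  {X | ∃ (k : ℕ) (obj : Fin k → C) (s : Fin k → ℤ),
    (∀ i, obj i ∈ S) ∧ Nonempty (X ≅ ⨁ (fun i => (obj i)⟦s i⟧))}

/-- `add S`: retracts of finite coproducts of shifts of objects of `S`, i.e. the
closure of `S` under shifts, finite coproducts and retracts. -/
def addSet (S : Set C) : Set C := {X | ∃ F ∈ finCoprodShifts S, IsRetract X F}

/-- Cones of morphisms from an object of `S` to an object of `T`. -/
def coneSet (S T : Set C) : Set C :=
  {Z | ∃ (A B : C) (f : A ⟶ B) (g : B ⟶ Z) (h : Z ⟶ A⟦(1 : ℤ)⟧),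
    A ∈ S ∧ B ∈ T ∧ Triangle.mk f g h ∈ distTriang C}

/-- The level filtration `⟨G⟩_n`: `⟨G⟩_0` consists of zero objects, `⟨G⟩_1 = add G`,
and `⟨G⟩_n = add (cones of maps from ⟨G⟩_{n-1} to ⟨G⟩_1)`. -/
def levelSet (G : C) : ℕ → Set C
  | 0 => {X | IsZero X}
  | 1 => addSet {G}
  | (n+2) => addSet (coneSet (levelSet G (n+1)) (addSet {G}))

/-- `coprod_n (G(-∞,∞))`: as `levelSet` but without retracts. -/
def coprodLevel (G : C) : ℕ → Set C
  | 0 => {X | IsZero X}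
  | 1 => finCoprodShifts {G}
  | (n+2) => coneSet (coprodLevel G (n+1)) (finCoprodShifts {G})

/-- The level of `E` with respect to `G`: the minimal `n` with `E ∈ ⟨G⟩_n`. -/
noncomputable def levelOf (G E : C) : ℕ∞ :=
  sInf {n : ℕ∞ | ∃ k : ℕ, n = k ∧ E ∈ levelSet G k}

/-- The Rouquier dimension of a (strictly full triangulated) subcategory `S` of `C`,
with levels computed in the ambient category: the least `d` such that
`S ⊆ ⟨G⟩_{d+1}` for some `G ∈ S`. -/
noncomputable def relRouquierDim (S : Set C) : ℕ∞ :=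
  sInf {d : ℕ∞ | ∃ (k : ℕ) (G : C), G ∈ S ∧ d = k ∧ S ⊆ levelSet G (k + 1)}

/-- `G` is a strong generator of the (strictly full triangulated) subcategory `S`. -/
def IsStrongGeneratorOf (S : Set C) (G : C) : Prop :=
  G ∈ S ∧ ∃ n : ℕ, S ⊆ levelSet G n

/-- A morphism `ψ : K ⟶ L` is `G`-ghost if every composition `G⟦n⟧ ⟶ K ⟶ L` vanishes. -/
def IsGhost (G : C) {K L : C} (ψ : K ⟶ L) : Prop :=
  ∀ (n : ℤ) (φ : G⟦n⟧ ⟶ K), φ ≫ ψ = 0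

end RouquierApprox

open CategoryTheory Limits Pretriangulated Triangulated RouquierApprox

section AuxLemmas

variable {C : Type*} [Category C] [Preadditive C] [HasZeroObject C] [HasShift C ℤ]
  [∀ (n : ℤ), (shiftFunctor C n).Additive] [Pretriangulated C] (t : TStructure C)

lemma aux_zero' {X Y : C} (f : X ⟶ Y) {n m : ℤ} (h : n < m) (hX : t.le n X) (hY : t.ge m Y) :
    f = 0 := by
  have hX' : t.le 0 (X⟦n⟧) := t.le_shift n n 0 (by omega) X hX
  have hY' : t.ge 1 (Y⟦n⟧) :=
    t.ge_antitone (show (1:ℤ) ≤ m - n by omega) _ (t.ge_shift m n (m - n) (by omega) Y hY)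
  have hz : (shiftFunctor C n).map f = 0 := t.zero' _ hX' hY'
  apply (shiftFunctor C n).map_injective
  rw [hz, Functor.map_zero]

lemma aux_le_biproduct {J : Type*} (f : J → C) [HasBiproduct f] (n : ℤ)
    (h : ∀ j, t.le n (f j)) : t.le n (⨁ f) := by
  obtain ⟨A, B, hA, hB, φ, ψ, δ, dist⟩ := t.exists_triangle (⨁ f) n (n + 1) rfl
  have hψ : ψ = 0 := biproduct.hom_ext' _ _ (fun j => by
    rw [aux_zero' t (biproduct.ι f j ≫ ψ) (show n < n + 1 by omega) (h j) hB, comp_zero])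
  obtain ⟨v, hv⟩ := Triangle.yoneda_exact₃ _ dist (𝟙 B) (by simp [hψ]; exact zero_comp)
  have hv0 : v = 0 := aux_zero' t v (show n - 1 < n + 1 by omega)
    (t.le_shift n 1 (n - 1) (by omega) A hA) hB
  have hB0 : IsZero B := by
    rw [IsZero.iff_id_eq_zero, hv, hv0, comp_zero]; rfl
  have : IsIso φ := (Triangle.isZero₃_iff_isIso₁ _ dist).1 hB0
  exact (t.le n).prop_of_iso (asIso φ) hA

lemma aux_ge_biproduct {J : Type*} (f : J → C) [HasBiproduct f] (n : ℤ)
    (h : ∀ j, t.ge n (f j)) : t.ge n (⨁ f) := by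
  obtain ⟨A, B, hA, hB, φ, ψ, δ, dist⟩ := t.exists_triangle (⨁ f) (n - 1) n (by omega)
  have hφ : φ = 0 := biproduct.hom_ext _ _ (fun j => by
    rw [aux_zero' t (φ ≫ biproduct.π f j) (show n - 1 < n by omega) hA (h j), zero_comp])
  obtain ⟨v, hv⟩ := Triangle.coyoneda_exact₂ _ (inv_rot_of_distTriang _ dist) (𝟙 A)
    (by simp [hφ]; exact comp_zero)
  have hv0 : v = 0 := aux_zero' t v (show n - 1 < n + 1 by omega) hA
    (t.ge_shift n (-1) (n + 1) (by omega) B hB)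
  have hA0 : IsZero A := by
    rw [IsZero.iff_id_eq_zero, hv, hv0, zero_comp]; rfl
  have : IsIso ψ := (Triangle.isZero₁_iff_isIso₂ _ dist).1 hA0
  exact (t.ge n).prop_of_iso (asIso ψ).symm hB

lemma aux_bij_of_trunc {a : ℤ} {L Y R : C} (ι : L ⟶ Y) (π : Y ⟶ R) (δ : R ⟶ L⟦(1:ℤ)⟧)
    (dist : Triangle.mk ι π δ ∈ distTriang C) (hL : t.le (a - 1) L)
    (X : C) (hX : t.ge a X) : Function.Bijective (fun u : R ⟶ X => π ≫ u) := by
  constructor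
  · intro u v huv
    dsimp at huv
    have h0 : π ≫ (u - v) = 0 := by rw [Preadditive.comp_sub, huv, sub_self]
    obtain ⟨g, hg⟩ := Triangle.yoneda_exact₃ _ dist (u - v) h0
    have hg0 : g = 0 := aux_zero' t g (show a - 2 < a by omega)
      (t.le_shift (a - 1) 1 (a - 2) (by omega) L hL) hX
    have : u - v = 0 := by rw [hg, hg0, comp_zero]; rfl
    exact sub_eq_zero.1 this
  · intro h
    have h0 : ι ≫ h = 0 := aux_zero' t _ (show a - 1 < a by omega) hL hX
    obtain ⟨g, hg⟩ := Triangle.yoneda_exact₂ _ dist h h0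
    exact ⟨g, hg.symm⟩

lemma aux_isIsoInDegreesGE {a : ℤ} {A B : C} (f : A ⟶ B)
    (hf : ∀ X : C, t.ge a X → Function.Bijective (fun u : B ⟶ X => f ≫ u)) :
    IsIsoInDegreesGE t a f := by
  intro TA TB g hg
  have bijA : ∀ (X : C), t.ge a X → Function.Bijective (fun u : TA.right ⟶ X => TA.π ≫ u) :=
    fun X hX => aux_bij_of_trunc t TA.ι TA.π TA.δ TA.dist TA.left_le X hX
  have bijB : ∀ (X : C), t.ge a X → Function.Bijective (fun u : TB.right ⟶ X => TB.π ≫ u) :=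
    fun X hX => aux_bij_of_trunc t TB.ι TB.π TB.δ TB.dist TB.left_le X hX
  obtain ⟨u, hu⟩ := (hf TA.right TA.right_ge).2 TA.π
  obtain ⟨g', hg'⟩ := (bijB TA.right TA.right_ge).2 u
  dsimp at hu hg'
  have key : (f ≫ TB.π) ≫ g' = TA.π := by rw [Category.assoc, hg', hu]
  have h1 : g ≫ g' = 𝟙 TA.right := by
    apply (bijA TA.right TA.right_ge).1
    show TA.π ≫ g ≫ g' = TA.π ≫ 𝟙 _
    rw [Category.comp_id, ← Category.assoc, hg, key]
  have h2 : g' ≫ g = 𝟙 TB.right := by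
    apply (bijB TB.right TB.right_ge).1
    apply (hf TB.right TB.right_ge).1
    show f ≫ TB.π ≫ g' ≫ g = f ≫ TB.π ≫ 𝟙 _
    rw [Category.comp_id, ← Category.assoc, ← Category.assoc, key, hg]
  exact ⟨g', h1, h2⟩

lemma aux_bij_proj {a : ℤ} {F F' F'' : C} (e : F ≅ F' ⊞ F'') (hF'' : t.le (a - 1) F'')
    (X : C) (hX : t.ge a X) :
    Function.Bijective (fun u : F' ⟶ X => (e.hom ≫ biprod.fst) ≫ u) := by
  constructor
  · intro u v huv
    dsimp at huv
    rw [Category.assoc, Category.assoc, cancel_epi e.hom] at huv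
    have h3 := congrArg (fun w => biprod.inl ≫ w) huv
    simpa using h3
  · intro h
    refine ⟨biprod.inl ≫ e.inv ≫ h, ?_⟩
    have hzero : biprod.inr ≫ e.inv ≫ h = 0 :=
      aux_zero' t _ (show a - 1 < a by omega) hF'' hX
    have hfst : biprod.fst ≫ biprod.inl ≫ e.inv ≫ h = e.inv ≫ h := by
      apply biprod.hom_ext'
      · simp
      · simpa using hzero.symm
    show (e.hom ≫ biprod.fst) ≫ biprod.inl ≫ e.inv ≫ h = h
    rw [Category.assoc, hfst, Iso.hom_inv_id_assoc]

noncomputable def splitIso {J : Type} [Fintype J] [DecidableEq J] (f : J → C)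
    (p : J → Prop) [DecidablePred p] :
    (⨁ f) ≅ (⨁ fun j : {j // p j} => f j) ⊞ (⨁ fun j : {j // ¬ p j} => f j) where
  hom := biprod.lift (biproduct.lift fun j => biproduct.π f j.1)
    (biproduct.lift fun j => biproduct.π f j.1)
  inv := biprod.desc (biproduct.desc fun j => biproduct.ι f j.1)
    (biproduct.desc fun j => biproduct.ι f j.1)
  hom_inv_id := by
    rw [biprod.lift_desc, biproduct.lift_desc, biproduct.lift_desc, ← biproduct.total]
    rw [← Finset.sum_filter_add_sum_filter_not Finset.univ p
      (fun j => biproduct.π f j ≫ biproduct.ι f j)]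
    congr 1
    · exact (Finset.sum_subtype (Finset.univ.filter p) (fun x => by simp)
        (fun j => biproduct.π f j ≫ biproduct.ι f j)).symm
    · exact (Finset.sum_subtype (Finset.univ.filter (fun j => ¬ p j)) (fun x => by simp)
        (fun j => biproduct.π f j ≫ biproduct.ι f j)).symm
  inv_hom_id := by
    ext j s
    all_goals
      simp only [Category.assoc, biprod.inl_desc_assoc, biprod.inr_desc_assoc,
        biproduct.ι_desc_assoc, biprod.lift_fst, biprod.lift_snd,
        biprod.inl_fst, biprod.inl_snd, biprod.inr_fst, biprod.inr_snd,
        biproduct.lift_π, Category.comp_id, Category.id_comp, comp_zero, zero_comp,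
        biproduct.ι_π]
    · by_cases h : j = s
      · subst h; simp
      · rw [dif_neg (fun hc => h (Subtype.ext hc)), dif_neg h]
    · exact dif_neg (fun hc => s.2 (by rw [← hc]; exact j.2))
    · exact dif_neg (fun hc => j.2 (by rw [hc]; exact s.2))
    · by_cases h : j = s
      · subst h; simp
      · rw [dif_neg (fun hc => h (Subtype.ext hc)), dif_neg h]

end AuxLemmas


/-- base case of Lemma 3.4. Let `T` be a triangulated category with
a bounded t-structure and `G` an object of amplitude `w` (i.e. the `H^n(G)` vanish
outside an interval of length `w`, equivalently `G ∈ T^{≥ i} ∩ T^{≤ i + w}` for some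
`i`). Then any finite coproduct of shifts of `G` decomposes, for every integer `a`,
as `F ≅ F' ⊞ F''` with `F'' ∈ T^{< a}`, `F' ∈ T^{≥ a - w}`, both again finite
coproducts of shifts of `G`, and the projection `F ⟶ F'` an isomorphism on `H^n`
for all `n ≥ a`. -/
theorem statement2 {C : Type*} [Category C] [Preadditive C] [HasZeroObject C] [HasShift C ℤ]
    [∀ (n : ℤ), (shiftFunctor C n).Additive] [Pretriangulated C]
    (t : TStructure C) (hb : IsBoundedTStructure t)
    (G : C) (w : ℕ) (hG : ∃ i : ℤ, t.ge i G ∧ t.le (i + w) G)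
    (F : C) (hF : F ∈ coprodLevel G 1) (a : ℤ) :
    ∃ (F' F'' : C) (e : F ≅ F' ⊞ F''),
      t.le (a - 1) F'' ∧ t.ge (a - w) F' ∧
      F' ∈ coprodLevel G 1 ∧ F'' ∈ coprodLevel G 1 ∧
      IsIsoInDegreesGE t a (e.hom ≫ biprod.fst) := by
  classical
  obtain ⟨k, obj, s, hobj, ⟨eF⟩⟩ := hF
  have hobj' : obj = fun _ => G := funext fun i => hobj i
  subst hobj'
  obtain ⟨iG, hGE, hLE⟩ := hG
  set p : Fin k → Prop := fun i => s i ≤ iG + (w : ℤ) - a with hp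
  have hge : ∀ i : Fin k, p i → t.ge (a - w) (G⟦s i⟧) := fun i hi =>
    t.ge_antitone (show a - (w : ℤ) ≤ iG - s i by
      simp only [hp] at hi; omega) _
      (t.ge_shift iG (s i) (iG - s i) (by omega) G hGE)
  have hle : ∀ i : Fin k, ¬ p i → t.le (a - 1) (G⟦s i⟧) := fun i hi =>
    t.le_monotone (show iG + (w : ℤ) - s i ≤ a - 1 by
      simp only [hp, not_le] at hi; omega) _
      (t.le_shift (iG + w) (s i) (iG + w - s i) (by omega) G hLE)
  let J₁ := {i : Fin k // p i}
  let J₂ := {i : Fin k // ¬ p i}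
  let e₁ : Fin (Fintype.card J₁) ≃ J₁ := (Fintype.equivFin J₁).symm
  let e₂ : Fin (Fintype.card J₂) ≃ J₂ := (Fintype.equivFin J₂).symm
  let F' : C := ⨁ (fun j : Fin (Fintype.card J₁) => G⟦s (e₁ j).1⟧)
  let F'' : C := ⨁ (fun j : Fin (Fintype.card J₂) => G⟦s (e₂ j).1⟧)
  have hF'ge : t.ge (a - w) F' :=
    aux_ge_biproduct t _ _ (fun j => hge (e₁ j).1 (e₁ j).2)
  have hF''le : t.le (a - 1) F'' :=
    aux_le_biproduct t _ _ (fun j => hle (e₂ j).1 (e₂ j).2)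
  let w₁ : (⨁ fun j : Fin (Fintype.card J₁) => G⟦s (e₁ j).1⟧) ≅
      (⨁ fun j : J₁ => G⟦s j.1⟧) :=
    biproduct.whiskerEquiv (f := fun j : Fin (Fintype.card J₁) => G⟦s (e₁ j).1⟧)
      (g := fun j : J₁ => G⟦s j.1⟧) e₁ (fun j => Iso.refl _)
  let w₂ : (⨁ fun j : Fin (Fintype.card J₂) => G⟦s (e₂ j).1⟧) ≅
      (⨁ fun j : J₂ => G⟦s j.1⟧) :=
    biproduct.whiskerEquiv (f := fun j : Fin (Fintype.card J₂) => G⟦s (e₂ j).1⟧)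
      (g := fun j : J₂ => G⟦s j.1⟧) e₂ (fun j => Iso.refl _)
  let e : F ≅ F' ⊞ F'' :=
    eF ≪≫ splitIso (fun i => G⟦s i⟧) p ≪≫ biprod.mapIso w₁.symm w₂.symm
  refine ⟨F', F'', e, hF''le, hF'ge, ?_, ?_, ?_⟩
  · exact ⟨Fintype.card J₁, fun _ => G, fun j => s (e₁ j).1,
      fun _ => rfl, ⟨Iso.refl _⟩⟩
  · exact ⟨Fintype.card J₂, fun _ => G, fun j => s (e₂ j).1,
      fun _ => rfl, ⟨Iso.refl _⟩⟩
  · exact aux_isIsoInDegreesGE t _ (fun X hX => aux_bij_proj t e hF''le X hX)
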